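/- Let ω_1,…,ω_N be nonnegative reals with Σ_k ω_k = 1, let ψ_k = Ω_k e^{iS_k/ħ} be pure states on ℝⁿ, and let M be an n×n real symmetric positive definite matrix. Define the kernel ρ(q,q') := Σ_k ω_k ψ_k(q) · conj(ψ_k(q')) and its amplitude Ω̄(q,q') := |ρ(q,q')|; assume Ω̄ is twice continuously differentiable in q in a neighborhood of the diagonal with Ω̄(q,q) > 0 for all q, and define the mixed-state mean value of the quantum potential ⟨Q̄⟩_ρ := −(ħ²/2) ∫_{ℝⁿ} [Σ_{i,j} M_{ij} ∂_{q_i}∂_{q_j} Ω̄(q,q')]|_{q'=q} dq. Then ⟨Q̄⟩_ρ ≥ Σ_k ω_k ⟨Q_k⟩, where ⟨Q_k⟩ := −(ħ²/2) ∫ Ω_k (Σ_{i,j} M_{ij} ∂_i∂_j Ω_k) dq is the mean value of the quantum potential of the pure state ψ_k. -/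

import Mathlib

open MeasureTheory Matrix

/-- Partial derivative `∂ⱼ f` of a real-valued function on `ℝⁿ`. -/
noncomputable def pd {n : ℕ} (j : Fin n) (f : (Fin n → ℝ) → ℝ) (q : Fin n → ℝ) : ℝ :=
  fderiv ℝ f q (Pi.single j 1)

/-- The pure state `ψ = Ω e^{iS/ħ}`. -/
noncomputable def pureState {n : ℕ} (hbar : ℝ) (Ω S : (Fin n → ℝ) → ℝ)
    (q : Fin n → ℝ) : ℂ :=
  (Ω q : ℂ) * Complex.exp (Complex.I * (S q : ℂ) / (hbar : ℂ))

/-- The kernel `ρ(q,q') = Σₖ ωₖ ψₖ(q) ψₖ(q')∗` of the mixed state. -/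
noncomputable def mixKer {n N : ℕ} (hbar : ℝ) (ω : Fin N → ℝ)
    (Ω S : Fin N → (Fin n → ℝ) → ℝ) (q q' : Fin n → ℝ) : ℂ :=
  ∑ k, (ω k : ℂ) * pureState hbar (Ω k) (S k) q *
    (starRingEnd ℂ) (pureState hbar (Ω k) (S k) q')

/-- The amplitude `Ω̄(q,q') = |ρ(q,q')|` of the mixed state kernel. -/
noncomputable def mixAmp {n N : ℕ} (hbar : ℝ) (ω : Fin N → ℝ)
    (Ω S : Fin N → (Fin n → ℝ) → ℝ) (q q' : Fin n → ℝ) : ℝ :=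
  ‖mixKer hbar ω Ω S q q'‖

/-- Second partial derivative `∂_{qᵢ}∂_{qⱼ} Ω̄(q,q')` in the first variable. -/
noncomputable def mixAmpD2 {n N : ℕ} (hbar : ℝ) (ω : Fin N → ℝ)
    (Ω S : Fin N → (Fin n → ℝ) → ℝ) (i j : Fin n) (q q' : Fin n → ℝ) : ℝ :=
  pd i (fun y => pd j (fun z => mixAmp hbar ω Ω S z q') y) q

/-- The mixed-state mean value of the quantum potential
`⟨Q̄⟩ρ = -(ħ²/2) ∫ [Σᵢⱼ Mᵢⱼ ∂_{qᵢ}∂_{qⱼ} Ω̄(q,q')]|_{q'=q} dq`. -/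
noncomputable def meanQmix {n N : ℕ} (hbar : ℝ) (M : Matrix (Fin n) (Fin n) ℝ)
    (ω : Fin N → ℝ) (Ω S : Fin N → (Fin n → ℝ) → ℝ) : ℝ :=
  -(hbar ^ 2 / 2) * ∫ q, ∑ i, ∑ j, M i j * mixAmpD2 hbar ω Ω S i j q q

/-- The pure-state mean value of the quantum potential
`⟨Q⟩ = -(ħ²/2) ∫ Ω Σᵢⱼ Mᵢⱼ ∂ᵢ∂ⱼΩ`. -/
noncomputable def meanQ {n : ℕ} (hbar : ℝ) (M : Matrix (Fin n) (Fin n) ℝ)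
    (Ω : (Fin n → ℝ) → ℝ) : ℝ :=
  -(hbar ^ 2 / 2) * ∫ q, Ω q * ∑ i, ∑ j, M i j * pd i (pd j Ω) q

open Filter Set in
private lemma aux_sd_test {g g' : ℝ → ℝ} {c : ℝ}
    (hg : ∀ᶠ t in nhds (0:ℝ), HasDerivAt g (g' t) t)
    (hg' : HasDerivAt g' c 0)
    (hmin : ∀ t, g 0 ≤ g t) : 0 ≤ c := by
  by_contra hc
  push_neg at hc
  have hmin0 : IsLocalMin g 0 := Filter.Eventually.of_forall hmin
  have h0 : g' 0 = 0 := by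
    have h1 := hmin0.deriv_eq_zero
    rwa [hg.self_of_nhds.deriv] at h1
  have hslope : Tendsto (fun t => g' t / t) (nhdsWithin 0 {(0:ℝ)}ᶜ) (nhds c) := by
    have h2 := hasDerivAt_iff_tendsto_slope.mp hg'
    have h3 : slope g' 0 = fun t => g' t / t := by
      funext t; simp [slope_def_field, h0]
    rwa [h3] at h2
  have hneg : ∀ᶠ t in nhdsWithin (0:ℝ) (Ioi 0), g' t < 0 := by
    have h2 : ∀ᶠ t in nhdsWithin (0:ℝ) {(0:ℝ)}ᶜ, g' t / t < 0 :=
      hslope.eventually_lt_const hc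
    have h3 : nhdsWithin 0 (Ioi 0) ≤ nhdsWithin (0:ℝ) {(0:ℝ)}ᶜ :=
      nhdsWithin_mono _ (fun x hx => ne_of_gt hx)
    filter_upwards [h2.filter_mono h3, self_mem_nhdsWithin] with t ht ht0
    have ht0' : (0:ℝ) < t := ht0
    have heq : g' t = (g' t / t) * t := (div_mul_cancel₀ _ (ne_of_gt ht0')).symm
    nlinarith
  obtain ⟨ε, hε, hball⟩ := Metric.eventually_nhds_iff_ball.mp hg
  obtain ⟨ε'', hε'', hball''⟩ :=
    Metric.eventually_nhds_iff_ball.mp (eventually_nhdsWithin_iff.mp hneg)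
  set b := min ε ε'' / 2 with hb
  have hbpos : 0 < b := by positivity
  have hbε : b < ε := by
    have := min_le_left ε ε''; simp only [hb]; linarith
  have hbε' : b < ε'' := by
    have := min_le_right ε ε''; simp only [hb]; linarith
  have hder : ∀ x ∈ Ioo (0:ℝ) b, HasDerivAt g (g' x) x := by
    intro x hx
    apply hball
    simp only [Metric.mem_ball, Real.dist_eq, sub_zero, abs_of_pos hx.1]
    linarith [hx.2]
  have hcont : ContinuousOn g (Icc 0 b) := by
    intro x hx
    apply ContinuousAt.continuousWithinAt
    apply HasDerivAt.continuousAt (f' := g' x)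
    apply hball
    simp only [Metric.mem_ball, Real.dist_eq, sub_zero, abs_of_nonneg hx.1]
    linarith [hx.2]
  obtain ⟨ξ, hξ, hξval⟩ := exists_hasDerivAt_eq_slope g g' hbpos hcont hder
  have hgpos : 0 ≤ (g b - g 0) / (b - 0) := by
    apply div_nonneg _ (by linarith)
    linarith [hmin b]
  have hξneg : g' ξ < 0 := by
    apply hball''
    · simp only [Metric.mem_ball, Real.dist_eq, sub_zero, abs_of_pos hξ.1]
      linarith [hξ.2]
    · exact hξ.1
  rw [hξval] at hξneg
  linarith

open Filter Set in
private lemma aux_dir {n : ℕ} {f : (Fin n → ℝ) → ℝ} {a : Fin n → ℝ}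
    (hf : ContDiffAt ℝ 2 f a) (hmin : ∀ y, f a ≤ f y) (v : Fin n → ℝ) :
    0 ≤ fderiv ℝ (fderiv ℝ f) a v v := by
  obtain ⟨u, hu, hcd⟩ := hf.contDiffOn le_rfl (by simp)
  obtain ⟨V, hVu, hVopen, haV⟩ := mem_nhds_iff.mp hu
  set L : ℝ → (Fin n → ℝ) := fun t => a + t • v with hL
  have hL0 : L 0 = a := by simp [hL]
  have hLd : ∀ t : ℝ, HasDerivAt L v t := by
    intro t
    have := ((hasDerivAt_id t).smul_const v).const_add a
    rw [one_smul] at this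
    exact this
  have hEV : ∀ᶠ t in nhds (0:ℝ), L t ∈ V := by
    have hc : ContinuousAt L 0 := (hLd 0).continuousAt
    have := hc.preimage_mem_nhds (hVopen.mem_nhds (by rw [hL0]; exact haV))
    exact this
  set g : ℝ → ℝ := fun t => f (L t) with hg_def
  set g' : ℝ → ℝ := fun t => fderiv ℝ f (L t) v with hg'_def
  have hg : ∀ᶠ t in nhds (0:ℝ), HasDerivAt g (g' t) t := by
    filter_upwards [hEV] with t ht
    have hdf : DifferentiableAt ℝ f (L t) :=
      (hcd.contDiffAt (Filter.mem_of_superset (hVopen.mem_nhds ht) hVu)).differentiableAt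
        (by norm_num)
    exact hdf.hasFDerivAt.comp_hasDerivAt t (hLd t)
  have hg'' : HasDerivAt g' (fderiv ℝ (fderiv ℝ f) a v v) 0 := by
    have h1 : HasFDerivAt (fderiv ℝ f) (fderiv ℝ (fderiv ℝ f) a) a :=
      ((hf.fderiv_right (m := 1) (by norm_num)).differentiableAt one_ne_zero).hasFDerivAt
    rw [← hL0] at h1
    have h2 : HasDerivAt (fun t => fderiv ℝ f (L t)) (fderiv ℝ (fderiv ℝ f) a v) 0 := by
      have h4 := h1.comp_hasDerivAt 0 (hLd 0)
      rw [hL0] at h4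
      exact h4
    have h3 := (ContinuousLinearMap.apply ℝ ℝ v).hasFDerivAt.comp_hasDerivAt 0 h2
    exact h3
  have hmin' : ∀ t, g 0 ≤ g t := fun t => by
    simp only [hg_def, hL0]
    exact hmin (L t)
  exact aux_sd_test hg hg'' hmin'

private lemma aux_pd_eq {n : ℕ} {f : (Fin n → ℝ) → ℝ} {a : Fin n → ℝ}
    (hf : ContDiffAt ℝ 2 f a) (i j : Fin n) :
    pd i (pd j f) a = fderiv ℝ (fderiv ℝ f) a (Pi.single i 1) (Pi.single j 1) := by
  have hd : DifferentiableAt ℝ (fderiv ℝ f) a :=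
    (hf.fderiv_right (m := 1) (by norm_num)).differentiableAt one_ne_zero
  have h1 : pd j f = fun y => (fderiv ℝ f y) (Pi.single j 1) := rfl
  rw [pd, h1, fderiv_clm_apply hd (differentiableAt_const _)]
  simp

open scoped MatrixOrder in
private lemma aux_contract {n : ℕ} {f : (Fin n → ℝ) → ℝ} {a : Fin n → ℝ}
    (hf : ContDiffAt ℝ 2 f a) (hmin : ∀ y, f a ≤ f y)
    {M : Matrix (Fin n) (Fin n) ℝ} (hM : M.PosSemidef) :
    0 ≤ ∑ i, ∑ j, M i j * pd i (pd j f) a := by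
  set B := fderiv ℝ (fderiv ℝ f) a with hB
  have hpd : ∀ i j, pd i (pd j f) a = B (Pi.single i 1) (Pi.single j 1) :=
    fun i j => aux_pd_eq hf i j
  set R := CFC.sqrt M with hR
  have hRsq : R * R = M := by
    exact CFC.sqrt_mul_sqrt_self M (nonneg_iff_posSemidef.mpr hM)
  have hRherm : ∀ i l, R i l = R l i := by
    intro i l
    have h1 := (nonneg_iff_posSemidef.mp (CFC.sqrt_nonneg M)).1
    have := congrFun (congrFun h1 i) l
    simpa [Matrix.conjTranspose_apply] using this.symm
  have hM_eq : ∀ i j, M i j = ∑ l, R l i * R l j := by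
    intro i j
    rw [← hRsq, Matrix.mul_apply]
    exact Finset.sum_congr rfl fun l _ => by rw [hRherm i l]
  have hv : ∀ (w : Fin n → ℝ), (∑ i, w i • (Pi.single i 1 : Fin n → ℝ)) = w := by
    intro w
    funext x
    simp [Finset.sum_apply, Pi.single_apply, Finset.sum_ite_eq']
  calc (0:ℝ) ≤ ∑ l, B (R l) (R l) :=
        Finset.sum_nonneg fun l _ => aux_dir hf hmin (R l)
    _ = ∑ i, ∑ j, M i j * pd i (pd j f) a := by
        have key : ∀ l, B (R l) (R l) = ∑ i, ∑ j, (R l i * R l j) * B (Pi.single i 1) (Pi.single j 1) := by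
          intro l
          conv_lhs => rw [← hv (R l)]
          rw [map_sum]
          conv_rhs => rw [Finset.sum_comm]
          refine Finset.sum_congr rfl fun x _ => ?_
          rw [map_sum, ContinuousLinearMap.sum_apply]
          refine Finset.sum_congr rfl fun i _ => ?_
          simp only [_root_.map_smul, ContinuousLinearMap.smul_apply, smul_eq_mul]
          ring
        rw [Finset.sum_congr rfl fun l _ => key l, Finset.sum_comm]
        refine Finset.sum_congr rfl fun i _ => ?_
        rw [Finset.sum_comm]
        refine Finset.sum_congr rfl fun j _ => ?_
        rw [hpd i j, hM_eq i j, ← Finset.sum_mul]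

private lemma aux_abs_pure {n : ℕ} (hbar : ℝ) (Ω S : (Fin n → ℝ) → ℝ) (q : Fin n → ℝ)
    (h : 0 ≤ Ω q) : ‖pureState hbar Ω S q‖ = Ω q := by
  unfold pureState
  rw [norm_mul, Complex.norm_real, Complex.norm_exp, Real.norm_of_nonneg h]
  have hre : (Complex.I * (S q : ℂ) / (hbar : ℂ)).re = 0 := by
    simp [Complex.div_re]
  rw [hre, Real.exp_zero, mul_one]

private lemma aux_bound {n N : ℕ} (hbar : ℝ) (ω : Fin N → ℝ) (hω : ∀ k, 0 ≤ ω k)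
    (Ω S : Fin N → (Fin n → ℝ) → ℝ) (hΩ : ∀ k q, 0 ≤ Ω k q) (y q' : Fin n → ℝ) :
    mixAmp hbar ω Ω S y q' ≤ ∑ k, (ω k * Ω k q') * Ω k y := by
  unfold mixAmp mixKer
  refine le_trans (norm_sum_le _ _) ?_
  refine Finset.sum_le_sum fun k _ => le_of_eq ?_
  rw [norm_mul, norm_mul, Complex.norm_conj, Complex.norm_real,
    aux_abs_pure _ _ _ _ (hΩ k y), aux_abs_pure _ _ _ _ (hΩ k q'),
    Real.norm_of_nonneg (hω k)]
  ring

private lemma aux_diag {n N : ℕ} (hbar : ℝ) (ω : Fin N → ℝ) (hω : ∀ k, 0 ≤ ω k)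
    (Ω S : Fin N → (Fin n → ℝ) → ℝ) (hΩ : ∀ k q, 0 ≤ Ω k q) (q : Fin n → ℝ) :
    mixAmp hbar ω Ω S q q = ∑ k, (ω k * Ω k q) * Ω k q := by
  have hker : mixKer hbar ω Ω S q q = (((∑ k, (ω k * Ω k q) * Ω k q : ℝ)) : ℂ) := by
    unfold mixKer
    push_cast
    refine Finset.sum_congr rfl fun k _ => ?_
    rw [mul_assoc, Complex.mul_conj, Complex.normSq_eq_norm_sq,
      aux_abs_pure _ _ _ _ (hΩ k q)]
    push_cast
    ring
  unfold mixAmp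
  rw [hker, Complex.norm_real, Real.norm_of_nonneg]
  exact Finset.sum_nonneg fun k _ =>
    mul_nonneg (mul_nonneg (hω k) (hΩ k q)) (hΩ k q)

private lemma aux_pd_sum {n N : ℕ} (j : Fin n) (c : Fin N → ℝ)
    (f : Fin N → (Fin n → ℝ) → ℝ) {y : Fin n → ℝ}
    (hf : ∀ k, DifferentiableAt ℝ (f k) y) :
    pd j (fun z => ∑ k, c k * f k z) y = ∑ k, c k * pd j (f k) y := by
  rw [pd, fderiv_fun_sum (fun k _ => (hf k).const_mul (c k))]
  rw [ContinuousLinearMap.sum_apply]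
  refine Finset.sum_congr rfl fun k _ => ?_
  rw [fderiv_const_mul (hf k) (c k), ContinuousLinearMap.smul_apply, smul_eq_mul]
  rfl

/-- the mixed-state mean value of the quantum potential dominates the
convex combination of the pure-state ones: `⟨Q̄⟩ρ ≥ Σₖ ωₖ ⟨Qₖ⟩`. -/
theorem meanQmix_ge_convex_sum {n N : ℕ} (hn : 1 ≤ n) (hN : 1 ≤ N)
    (hbar : ℝ) (hhbar : 0 < hbar)
    (M : Matrix (Fin n) (Fin n) ℝ) (hM : M.PosDef)
    (ω : Fin N → ℝ) (hω : ∀ k, 0 ≤ ω k) (hωsum : ∑ k, ω k = 1)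
    (Ω : Fin N → (Fin n → ℝ) → ℝ)
    (hΩc : ∀ k, ContDiff ℝ 2 (Ω k)) (hΩpos : ∀ k q, 0 < Ω k q)
    (hΩnorm : ∀ k, ∫ q, (Ω k q) ^ 2 = 1)
    (S : Fin N → (Fin n → ℝ) → ℝ) (hSc : ∀ k, ContDiff ℝ 2 (S k))
    -- integrability of the pure-state data
    (hint1 : ∀ k j, Integrable (fun q => (Ω k q) ^ 2 * pd j (S k) q))
    (hint2 : ∀ k i j, Integrable (fun q => (Ω k q) ^ 2 * (pd i (S k) q * pd j (S k) q)))
    (hint3 : ∀ k i j, Integrable (fun q => Ω k q * pd i (pd j (Ω k)) q))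
    (hint4 : ∀ k i j, Integrable (fun q => pd i (Ω k) q * pd j (Ω k) q))
    -- `Ω̄` is twice continuously differentiable in `q` near the diagonal, positive there
    (hsmooth : ∃ U : Set ((Fin n → ℝ) × (Fin n → ℝ)), IsOpen U ∧ (∀ q, (q, q) ∈ U) ∧
      ∀ p ∈ U, ContDiffAt ℝ 2 (fun y => mixAmp hbar ω Ω S y p.2) p.1)
    (hpos : ∀ q, 0 < mixAmp hbar ω Ω S q q)
    -- integrability of the mixed-state integrand
    (hint5 : Integrable (fun q => ∑ i, ∑ j, M i j * mixAmpD2 hbar ω Ω S i j q q))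
    -- all boundary terms in integration by parts vanish
    (hbd1 : ∀ k i j, ∫ q, pd i (fun x => Ω k x * pd j (Ω k) x) q = 0)
    (hbd2 : ∀ k i, ∫ q, pd i (fun x => (Ω k x) ^ 2) q = 0) :
    meanQmix hbar M ω Ω S ≥ ∑ k, ω k * meanQ hbar M (Ω k) := by
  obtain ⟨U, hUopen, hUdiag, hUsmooth⟩ := hsmooth
  have hΩnn : ∀ k q, 0 ≤ Ω k q := fun k q => (hΩpos k q).le
  have hpdΩdiff : ∀ k (j : Fin n), Differentiable ℝ (pd j (Ω k)) := by
    intro k j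
    have h1 : ContDiff ℝ 1 (fderiv ℝ (Ω k)) := (hΩc k).fderiv_right (by norm_num)
    exact fun y => (h1.differentiable one_ne_zero y).clm_apply (differentiableAt_const _)
  -- the pointwise key inequality
  have key : ∀ q : Fin n → ℝ,
      ∑ i, ∑ j, M i j * mixAmpD2 hbar ω Ω S i j q q ≤
      ∑ k, ω k * (Ω k q * ∑ i, ∑ j, M i j * pd i (pd j (Ω k)) q) := by
    intro q
    set c : Fin N → ℝ := fun k => ω k * Ω k q with hcdef
    set m : (Fin n → ℝ) → ℝ := fun y => mixAmp hbar ω Ω S y q with hmdef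
    set h : (Fin n → ℝ) → ℝ := fun y => ∑ k, c k * Ω k y with hhdef
    have hhc : ContDiff ℝ 2 h := ContDiff.sum fun k _ => contDiff_const.mul (hΩc k)
    have hmc : ContDiffAt ℝ 2 m q := hUsmooth (q, q) (hUdiag q)
    set φ : (Fin n → ℝ) → ℝ := fun y => h y - m y with hφdef
    have hφc : ContDiffAt ℝ 2 φ q := hhc.contDiffAt.sub hmc
    have hφ0 : φ q = 0 := by
      have hd := aux_diag hbar ω hω Ω S hΩnn q
      simp only [hφdef, hmdef, hhdef, hcdef]
      rw [hd]
      ring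
    have hφmin : ∀ y, φ q ≤ φ y := by
      intro y
      rw [hφ0]
      have h1 : m y ≤ h y := by
        have := aux_bound hbar ω hω Ω S hΩnn y q
        simp only [hmdef, hhdef, hcdef]
        exact this
      simp only [hφdef]
      linarith
    have hkey := aux_contract hφc hφmin hM.posSemidef
    -- identify pd i (pd j φ) q
    have hV : ∀ᶠ y in nhds q, (y, q) ∈ U := by
      have hcont : Continuous (fun y : Fin n → ℝ => (y, q)) :=
        continuous_id.prodMk continuous_const
      exact hcont.continuousAt.preimage_mem_nhds (hUopen.mem_nhds (hUdiag q))
    have hpdh : ∀ (j : Fin n), pd j h = fun y => ∑ k, c k * pd j (Ω k) y := by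
      intro j
      funext y
      simp only [hhdef]
      exact aux_pd_sum j c Ω (fun k => ((hΩc k).differentiable (by norm_num)) y)
    have hpdhd : ∀ (j : Fin n), DifferentiableAt ℝ (pd j h) q := by
      intro j
      rw [hpdh j]
      exact DifferentiableAt.fun_sum fun k _ => ((hpdΩdiff k j) q).const_mul (c k)
    have hpdmd : ∀ (j : Fin n), DifferentiableAt ℝ (pd j m) q := by
      intro j
      exact ((hmc.fderiv_right (m := 1) (by norm_num)).differentiableAt one_ne_zero).clm_apply
        (differentiableAt_const _)
    have hsplit : ∀ i j : Fin n, pd i (pd j φ) q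
        = (∑ k, c k * pd i (pd j (Ω k)) q) - mixAmpD2 hbar ω Ω S i j q q := by
      intro i j
      have e1 : pd j φ =ᶠ[nhds q] fun y => pd j h y - pd j m y := by
        filter_upwards [hV] with y hy
        have hdm : DifferentiableAt ℝ m y := (hUsmooth (y, q) hy).differentiableAt (by norm_num)
        have hdh : DifferentiableAt ℝ h y := (hhc.differentiable (by norm_num)) y
        show pd j φ y = pd j h y - pd j m y
        simp only [pd, hφdef]
        rw [fderiv_fun_sub hdh hdm]
        simp
      have e2 : pd i (pd j φ) q = fderiv ℝ (fun y => pd j h y - pd j m y) q (Pi.single i 1) := by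
        show fderiv ℝ (pd j φ) q (Pi.single i 1) = _
        rw [e1.fderiv_eq]
      rw [e2, fderiv_fun_sub (hpdhd j) (hpdmd j), ContinuousLinearMap.sub_apply]
      have e3 : fderiv ℝ (pd j h) q (Pi.single i 1) = ∑ k, c k * pd i (pd j (Ω k)) q := by
        rw [hpdh j]
        exact aux_pd_sum i c (fun k => pd j (Ω k)) (fun k => (hpdΩdiff k j) q)
      rw [e3]
      rfl
    -- compare the two M-contractions
    have hle : ∑ i, ∑ j, M i j * mixAmpD2 hbar ω Ω S i j q q ≤
        ∑ i, ∑ j, M i j * (∑ k, c k * pd i (pd j (Ω k)) q) := by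
      have hdiff : ∑ i, ∑ j, M i j * pd i (pd j φ) q
          = (∑ i, ∑ j, M i j * (∑ k, c k * pd i (pd j (Ω k)) q))
            - ∑ i, ∑ j, M i j * mixAmpD2 hbar ω Ω S i j q q := by
        rw [← Finset.sum_sub_distrib]
        refine Finset.sum_congr rfl fun i _ => ?_
        rw [← Finset.sum_sub_distrib]
        refine Finset.sum_congr rfl fun j _ => ?_
        rw [hsplit i j, mul_sub]
      rw [hdiff] at hkey
      linarith
    refine le_trans hle (le_of_eq ?_)
    calc ∑ i, ∑ j, M i j * (∑ k, c k * pd i (pd j (Ω k)) q)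
        = ∑ i, ∑ j, ∑ k, c k * (M i j * pd i (pd j (Ω k)) q) := by
          refine Finset.sum_congr rfl fun i _ => Finset.sum_congr rfl fun j _ => ?_
          rw [Finset.mul_sum]
          exact Finset.sum_congr rfl fun k _ => by ring
      _ = ∑ i, ∑ k, ∑ j, c k * (M i j * pd i (pd j (Ω k)) q) :=
          Finset.sum_congr rfl fun i _ => Finset.sum_comm
      _ = ∑ k, ∑ i, ∑ j, c k * (M i j * pd i (pd j (Ω k)) q) := Finset.sum_comm
      _ = ∑ k, ω k * (Ω k q * ∑ i, ∑ j, M i j * pd i (pd j (Ω k)) q) := by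
          refine Finset.sum_congr rfl fun k _ => ?_
          simp only [hcdef, Finset.mul_sum]
          exact Finset.sum_congr rfl fun i _ => Finset.sum_congr rfl fun j _ => by ring
  -- integrability of the right-hand side
  have hGint : ∀ k, Integrable (fun q => Ω k q * ∑ i, ∑ j, M i j * pd i (pd j (Ω k)) q) := by
    intro k
    have heq : (fun q => Ω k q * ∑ i, ∑ j, M i j * pd i (pd j (Ω k)) q)
        = fun q => ∑ i, ∑ j, M i j * (Ω k q * pd i (pd j (Ω k)) q) := by
      funext q
      rw [Finset.mul_sum]
      refine Finset.sum_congr rfl fun i _ => ?_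
      rw [Finset.mul_sum]
      exact Finset.sum_congr rfl fun j _ => by ring
    rw [heq]
    exact integrable_finset_sum _ fun i _ => integrable_finset_sum _ fun j _ =>
      (hint3 k i j).const_mul (M i j)
  have hGsum : Integrable
      (fun q => ∑ k, ω k * (Ω k q * ∑ i, ∑ j, M i j * pd i (pd j (Ω k)) q)) :=
    integrable_finset_sum _ fun k _ => (hGint k).const_mul (ω k)
  have hIle : (∫ q, ∑ i, ∑ j, M i j * mixAmpD2 hbar ω Ω S i j q q)
      ≤ ∫ q, ∑ k, ω k * (Ω k q * ∑ i, ∑ j, M i j * pd i (pd j (Ω k)) q) :=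
    integral_mono hint5 hGsum key
  have hcoef : -(hbar ^ 2 / 2) ≤ 0 := by
    have : (0:ℝ) ≤ hbar ^ 2 / 2 := by positivity
    linarith
  have hfin : ∑ k, ω k * meanQ hbar M (Ω k)
      = -(hbar ^ 2 / 2) * ∫ q, ∑ k, ω k * (Ω k q * ∑ i, ∑ j, M i j * pd i (pd j (Ω k)) q) := by
    rw [integral_finset_sum _ fun k _ => (hGint k).const_mul (ω k)]
    rw [Finset.mul_sum]
    refine Finset.sum_congr rfl fun k _ => ?_
    rw [integral_const_mul, meanQ]
    ring
  rw [meanQmix, hfin, ge_iff_le]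
  exact mul_le_mul_of_nonpos_left hIle hcoef
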